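/- arXiv:math/0702214 — 3 statements merged into one kernel-verified Lean document; each statement's English description precedes it below -/
import Mathlib

section
/- Let k ≥ 1, set K = 2^k − 1 and δ = π/(16K + 2). Let x₀, …, x_k ∈ ℂ be k+1 pairwise distinct points, and for a subset I ⊆ {0, …, k} put S_I = Σ_{j∈I} 1/∏_{l≠j}(x_j − x_l). Then there exists an integer ℓ with |ℓ| ≤ 2K − 1 such that the angle θ := πℓ/(8K+1) lies in (−π/4, π/4) and, for every nonempty proper subset I ⊊ {0, …, k}, |Re(e^{iθ}·S_I)| ≥ sin(δ)·|S_I| (equivalently, e^{iθ}·S_I stays at angular distance at least δ from the imaginary axis whenever S_I ≠ 0). -/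
open Real Finset

/-- If `|cos x| < sin δ` with `0 < δ ≤ π/2`, then `x` is within `δ` of `π/2 + nπ`. -/
lemma aux_near_half_pi {δ x : ℝ} (h0 : 0 < δ) (hδ : δ ≤ π / 2)
    (h : |Real.cos x| < Real.sin δ) : ∃ n : ℤ, |x - (π / 2 + n * π)| < δ := by
  set y : ℝ := x - π / 2 with hy
  have hsy : |Real.sin y| < Real.sin δ := by
    have : Real.sin y = -Real.cos x := Real.sin_sub_pi_div_two x
    rw [this, abs_neg]; exact h
  set n : ℤ := round (y / π) with hn
  set r : ℝ := y - n * π with hr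
  have hπ : (0:ℝ) < π := Real.pi_pos
  have hrle : |r| ≤ π / 2 := by
    have := abs_sub_round (y / π)
    have h2 : |y / π - n| * π ≤ (1/2) * π := by
      apply mul_le_mul_of_nonneg_right this hπ.le
    have heq : (y / π - n) * π = r := by
      rw [hr]; field_simp
    have h3 : |y / π - n| * π = |r| := by
      rw [← heq, abs_mul, abs_of_pos hπ]
    rw [h3] at h2
    linarith
  have hsin_eq : |Real.sin y| = |Real.sin r| := by
    have : y = r + n * π := by ring
    rw [this, Real.sin_add_int_mul_pi, abs_mul]
    have hone : |((-1 : ℝ)) ^ n| = 1 := by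
      rcases Int.even_or_odd n with he | ho
      · rw [he.neg_one_zpow, abs_one]
      · rw [ho.neg_one_zpow, abs_neg, abs_one]
    rw [hone, one_mul]
  have habs : |Real.sin r| = Real.sin |r| := by
    rcases abs_cases r with ⟨h1, h2⟩ | ⟨h1, h2⟩
    · rw [h1, abs_of_nonneg (Real.sin_nonneg_of_nonneg_of_le_pi h2 (by linarith))]
    · have h4 : 0 ≤ Real.sin (-r) :=
        Real.sin_nonneg_of_nonneg_of_le_pi (by linarith) (by linarith)
      rw [Real.sin_neg] at h4
      rw [h1, Real.sin_neg, abs_of_nonpos (by linarith)]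
  have hrlt : |r| < δ := by
    by_contra hcon
    push_neg at hcon
    have : Real.sin δ ≤ Real.sin |r| := by
      rcases eq_or_lt_of_le hcon with heq | hlt
      · rw [heq]
      · exact le_of_lt (Real.sin_lt_sin_of_lt_of_le_pi_div_two (by linarith) hrle hlt)
    rw [hsin_eq, habs] at hsy
    linarith
  exact ⟨n, by rw [show x - (π / 2 + n * π) = r by rw [hr, hy]; ring]; exact hrlt⟩

/-- Uniqueness of a "bad" grid angle. -/
lemma aux_bad_unique {M : ℤ} (hM : 1 ≤ M) (φ : ℝ) {a b : ℤ}
    (hd : |a - b| < M)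
    (ha : |Real.cos (π * a / M + φ)| < Real.sin (π / (2 * M)))
    (hb : |Real.cos (π * b / M + φ)| < Real.sin (π / (2 * M))) : a = b := by
  have hπ : (0:ℝ) < π := Real.pi_pos
  have hMR : (1:ℝ) ≤ (M:ℝ) := by exact_mod_cast hM
  have hMpos : (0:ℝ) < (M:ℝ) := by linarith
  have h0 : 0 < π / (2 * M) := by positivity
  have hδ : π / (2 * M) ≤ π / 2 := by
    apply div_le_div_of_nonneg_left hπ.le (by linarith)
    linarith
  obtain ⟨n, hn⟩ := aux_near_half_pi h0 hδ ha
  obtain ⟨m, hm⟩ := aux_near_half_pi h0 hδ hb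
  -- |π(a-b)/M - (n-m)π| < π/M
  have hdiff : |π * (a - b) / M - (n - m) * π| < π / M := by
    have : π * (a:ℝ) / M + φ - (π / 2 + n * π) - (π * (b:ℝ) / M + φ - (π / 2 + m * π))
        = π * ((a:ℝ) - b) / M - ((n:ℝ) - m) * π := by ring
    calc |π * ((a:ℝ) - b) / M - ((n:ℝ) - m) * π|
        ≤ |π * (a:ℝ) / M + φ - (π / 2 + n * π)| + |π * (b:ℝ) / M + φ - (π / 2 + m * π)| := by
          rw [← this]; exact abs_sub _ _
      _ < π / (2 * M) + π / (2 * M) := add_lt_add hn hm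
      _ = π / M := by field_simp; ring
  have hint : |((a:ℝ) - b) - ((n:ℝ) - m) * M| < 1 := by
    have hfact : π * ((a:ℝ) - b) / M - ((n:ℝ) - m) * π
        = (π / M) * (((a:ℝ) - b) - ((n:ℝ) - m) * M) := by
      field_simp
    rw [hfact, abs_mul, abs_of_pos (by positivity : (0:ℝ) < π / M)] at hdiff
    exact (mul_lt_iff_lt_one_right (by positivity : (0:ℝ) < π / M)).mp hdiff
  have hz : (a - b) - (n - m) * M = 0 := by
    have : |(a - b) - (n - m) * M| < 1 := by
      have := hint
      rw [show ((a:ℝ) - b) - ((n:ℝ) - m) * (M:ℝ) = (((a - b) - (n - m) * M : ℤ) : ℝ) by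
        push_cast; ring] at this
      exact_mod_cast this
    exact Int.abs_lt_one_iff.mp this
  -- a - b = (n - m) M, |a - b| < M forces n = m
  have heq2 : a - b = (n - m) * M := by
    have := sub_eq_zero.mp hz
    linarith
  have hnm : n = m := by
    by_contra hne
    have h1 : 1 ≤ |n - m| := Int.one_le_abs (by omega)
    have h2 : M ≤ |a - b| := by
      rw [heq2, abs_mul, abs_of_pos (by omega : (0:ℤ) < M)]
      nlinarith [abs_nonneg (n - m)]
    linarith
  rw [hnm, sub_self, zero_mul] at heq2
  omega

/-- **Existence of an adequate (good) angle** (Lemma on `θ(ε)`).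
Let `k ≥ 1`, `K = 2^k − 1`, `δ = π/(16K+2)`, and let `x₀, …, x_k` be pairwise
distinct points of `ℂ`.  For a nonempty proper subset `I ⊊ {0,…,k}` put
`S_I = Σ_{j∈I} 1/∏_{l≠j}(x_j − x_l)`.  Then there is an integer `ℓ` with
`|ℓ| ≤ 2K − 1` such that `θ = πℓ/(8K+1)` lies in `(−π/4, π/4)` and for every
such `I` one has `|Re(e^{iθ} S_I)| ≥ sin(δ)·|S_I|`. -/
theorem adequate_angle (k : ℕ) (hk : 1 ≤ k) (x : Fin (k + 1) → ℂ)
    (hx : Function.Injective x) :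
    ∃ ℓ : ℤ, |ℓ| ≤ 2 * ((2 : ℤ) ^ k - 1) - 1 ∧
      |Real.pi * (ℓ : ℝ) / (8 * ((2 : ℝ) ^ k - 1) + 1)| < Real.pi / 4 ∧
      ∀ I : Finset (Fin (k + 1)), I.Nonempty → I ≠ Finset.univ →
        Real.sin (Real.pi / (16 * ((2 : ℝ) ^ k - 1) + 2)) *
            ‖∑ j ∈ I, (∏ l ∈ Finset.univ.erase j, (x j - x l))⁻¹‖ ≤
          |(Complex.exp (Complex.I *
              ((Real.pi * (ℓ : ℝ) / (8 * ((2 : ℝ) ^ k - 1) + 1) : ℝ) : ℂ)) *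
            ∑ j ∈ I, (∏ l ∈ Finset.univ.erase j, (x j - x l))⁻¹).re| := by
  have hπ : (0:ℝ) < π := Real.pi_pos
  set K : ℤ := 2 ^ k - 1 with hK
  have hK1 : 1 ≤ K := by
    have : (2:ℤ) ≤ 2 ^ k := by
      calc (2:ℤ) = 2 ^ 1 := by ring
        _ ≤ 2 ^ k := pow_le_pow_right₀ (by norm_num) hk
    omega
  set M : ℤ := 8 * K + 1 with hM
  have hM9 : 9 ≤ M := by omega
  have hMR : ((M:ℝ)) = 8 * ((2:ℝ) ^ k - 1) + 1 := by
    rw [hM, hK]; push_cast; ring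
  have hMRpos : (0:ℝ) < (M:ℝ) := by exact_mod_cast (by omega : (0:ℤ) < M)
  have hδeq : π / (16 * ((2:ℝ) ^ k - 1) + 2) = π / (2 * M) := by
    rw [hMR]; ring_nf
  set S : Finset (Fin (k + 1)) → ℂ :=
    fun I => ∑ j ∈ I, (∏ l ∈ Finset.univ.erase j, (x j - x l))⁻¹ with hS
  set θ : ℤ → ℝ := fun ℓ => π * (ℓ : ℝ) / (8 * ((2 : ℝ) ^ k - 1) + 1) with hθ
  have hθeq : ∀ ℓ : ℤ, θ ℓ = π * (ℓ : ℝ) / (M : ℝ) := by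
    intro ℓ; rw [hθ, hMR]
  set L : Finset ℤ := Finset.Icc (-(2 * K - 1)) (2 * K - 1) with hL
  set P : Finset (Finset (Fin (k + 1))) :=
    Finset.univ.filter (fun I => I.Nonempty ∧ I ≠ Finset.univ) with hP
  set bad : Finset (Fin (k + 1)) → ℤ → Prop := fun I ℓ =>
    ¬ (Real.sin (π / (2 * M)) * ‖S I‖ ≤
        |(Complex.exp (Complex.I * ((θ ℓ : ℝ) : ℂ)) * S I).re|) with hbad
  have hbad_cos : ∀ I ℓ, bad I ℓ →
      |Real.cos (π * (ℓ:ℝ) / (M:ℝ) + (S I).arg)| < Real.sin (π / (2 * M)) := by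
    intro I ℓ hb
    rw [hbad] at hb
    push_neg at hb
    have hre : (Complex.exp (Complex.I * ((θ ℓ : ℝ) : ℂ)) * S I).re
        = ‖S I‖ * Real.cos (θ ℓ + (S I).arg) := by
      conv_lhs => rw [← Complex.norm_mul_exp_arg_mul_I (S I)]
      rw [show Complex.I * ((θ ℓ : ℝ) : ℂ) = ((θ ℓ : ℝ) : ℂ) * Complex.I by ring,
        show ((‖S I‖ : ℝ) : ℂ) * Complex.exp (((S I).arg : ℂ) * Complex.I)
          = Complex.exp (((S I).arg : ℂ) * Complex.I) * ((‖S I‖ : ℝ) : ℂ) by ring,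
        ← mul_assoc, ← Complex.exp_add]
      rw [show ((θ ℓ : ℝ) : ℂ) * Complex.I + ((S I).arg : ℂ) * Complex.I
          = ((θ ℓ + (S I).arg : ℝ) : ℂ) * Complex.I by push_cast; ring]
      rw [Complex.mul_re, Complex.ofReal_re, Complex.ofReal_im, mul_zero, sub_zero,
        Complex.exp_ofReal_mul_I_re]
      ring
    have hSpos : 0 < ‖S I‖ := by
      rcases eq_or_lt_of_le (norm_nonneg (S I)) with heq | h
      · exfalso
        rw [← heq] at hb
        simp only [mul_zero] at hb
        exact absurd (abs_nonneg _) (not_le.mpr hb)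
      · exact h
    rw [hre, abs_mul, abs_of_pos hSpos] at hb
    rw [← hθeq ℓ]
    by_contra hcon
    push_neg at hcon
    nlinarith [hb]
  -- each I is bad for at most one ℓ in L
  have hcard1 : ∀ I, (L.filter (bad I)).card ≤ 1 := by
    intro I
    apply Finset.card_le_one.mpr
    intro a ha b hb
    rw [Finset.mem_filter] at ha hb
    obtain ⟨haL, haB⟩ := ha
    obtain ⟨hbL, hbB⟩ := hb
    rw [hL, Finset.mem_Icc] at haL hbL
    have hd : |a - b| < M := by rw [abs_lt]; omega
    exact aux_bad_unique (by omega) ((S I).arg) hd (hbad_cos I a haB) (hbad_cos I b hbB)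
  set B : Finset ℤ := P.biUnion (fun I => L.filter (bad I)) with hB
  have hBcard : B.card ≤ P.card := by
    calc B.card ≤ ∑ I ∈ P, (L.filter (bad I)).card := Finset.card_biUnion_le
      _ ≤ ∑ I ∈ P, 1 := Finset.sum_le_sum (fun I _ => hcard1 I)
      _ = P.card := by rw [Finset.sum_const, smul_eq_mul, mul_one]
  have hPcard : P.card ≤ 2 ^ (k + 1) - 2 := by
    have hsub : P ⊆ Finset.univ \ {∅, Finset.univ} := by
      intro I hI
      rw [hP, Finset.mem_filter] at hI
      rw [Finset.mem_sdiff, Finset.mem_insert, Finset.mem_singleton]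
      exact ⟨Finset.mem_univ _, by
        push_neg
        exact ⟨hI.2.1, hI.2.2⟩⟩
    calc P.card ≤ (Finset.univ \ ({∅, Finset.univ} : Finset (Finset (Fin (k+1))))).card :=
          Finset.card_le_card hsub
      _ = 2 ^ (k + 1) - 2 := by
          rw [Finset.card_sdiff_of_subset (Finset.subset_univ _)]
          congr 1
          · simp [Finset.card_univ]
          · rw [Finset.card_insert_of_notMem, Finset.card_singleton]
            rw [Finset.mem_singleton]
            exact fun h => (Finset.univ_nonempty).ne_empty h.symm
  have hLcard : L.card = (4 * K - 1).toNat := by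
    rw [hL, Int.card_Icc]
    congr 1
    omega
  have hlt : B.card < L.card := by
    have h2k : 2 ≤ 2 ^ k := by
      calc 2 = 2 ^ 1 := by ring
        _ ≤ 2 ^ k := Nat.pow_le_pow_right (by norm_num) hk
    have hpow : (2:ℤ) ^ k = ((2 ^ k : ℕ) : ℤ) := by push_cast; ring
    have htn : (4 * K - 1).toNat = 4 * 2 ^ k - 5 := by
      rw [hK, hpow]; omega
    have hps : 2 ^ (k + 1) = 2 * 2 ^ k := by rw [pow_succ]; ring
    rw [hLcard, htn]
    omega
  have hex : ∃ ℓ ∈ L, ℓ ∉ B := by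
    by_contra hcon
    push_neg at hcon
    exact absurd (Finset.card_le_card hcon) (not_le.mpr hlt)
  obtain ⟨ℓ, hℓL, hℓB⟩ := hex
  rw [hL, Finset.mem_Icc] at hℓL
  refine ⟨ℓ, abs_le.mpr ⟨hℓL.1, hℓL.2⟩, ?_, ?_⟩
  · -- |θ ℓ| < π/4
    have h1 : |(ℓ:ℝ)| ≤ 2 * (K:ℝ) - 1 := by
      rw [← Int.cast_abs]
      have : |ℓ| ≤ 2 * K - 1 := by rw [abs_le]; omega
      exact_mod_cast (by exact_mod_cast this : (|ℓ|:ℝ) ≤ ((2 * K - 1 : ℤ) : ℝ))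
    have hKR : (1:ℝ) ≤ (K:ℝ) := by exact_mod_cast hK1
    rw [show π * (ℓ : ℝ) / (8 * ((2 : ℝ) ^ k - 1) + 1) = π * (ℓ:ℝ) / (M:ℝ) by rw [hMR]]
    rw [abs_div, abs_mul, abs_of_pos hπ, abs_of_pos hMRpos]
    rw [div_lt_div_iff₀ hMRpos (by norm_num : (0:ℝ) < 4)]
    have hMK : (M:ℝ) = 8 * (K:ℝ) + 1 := by rw [hM]; push_cast; ring
    rw [hMK]
    nlinarith
  · intro I hne hprop
    have hIP : I ∈ P := by
      rw [hP, Finset.mem_filter]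
      exact ⟨Finset.mem_univ _, hne, hprop⟩
    have hnb : ¬ bad I ℓ := by
      intro hb
      exact hℓB (Finset.mem_biUnion.mpr ⟨I, hIP, Finset.mem_filter.mpr
        ⟨by rw [hL, Finset.mem_Icc]; omega, hb⟩⟩)
    simp only [hbad, not_not] at hnb
    rw [hδeq]
    exact hnb
end

section
/- Let k ≥ 1, a ∈ ℂ, ε ∈ ℂ^k, and let r > 0 be such that every root of P_ε has modulus strictly less than r (for instance any r > √k·‖ε‖). Then (1/(2πi)) · ∮_{|z|=r} (1 + a·z^k)/P_ε(z) dz = a, where the integral is taken over the positively oriented circle of radius r centered at 0. In particular the formal invariant a is given by this contour integral and remains bounded when several roots of P_ε collide. -/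
open Complex Metric Finset

set_option maxHeartbeats 1000000 in
/-- **The formal invariant `a` as a contour integral.**
If every root of `P_ε(x) = x^{k+1} + ε_{k−1}x^{k−1} + ⋯ + ε₀` has modulus `< r`,
then `(1/(2πi)) ∮_{|z|=r} (1 + a z^k)/P_ε(z) dz = a`. -/
theorem formal_invariant_contour_integral (k : ℕ) (hk : 1 ≤ k) (a : ℂ)
    (ε : Fin k → ℂ) (r : ℝ) (hr : 0 < r)
    (hroots : ∀ z : ℂ,
      z ^ (k + 1) + ∑ j : Fin k, ε j * z ^ (j : ℕ) = 0 → ‖z‖ < r) :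
    (2 * (Real.pi : ℂ) * Complex.I)⁻¹ *
      (∮ z in C(0, r),
        (1 + a * z ^ k) / (z ^ (k + 1) + ∑ j : Fin k, ε j * z ^ (j : ℕ))) = a := by
  set P : ℂ → ℂ := fun z => z ^ (k + 1) + ∑ j : Fin k, ε j * z ^ (j : ℕ) with hPdef
  set f : ℂ → ℂ := fun z => (1 + a * z ^ k) / P z with hfdef
  have hPne : ∀ z : ℂ, r ≤ ‖z‖ → P z ≠ 0 := by
    intro z hz h
    exact absurd (hroots z h) (not_lt.2 hz)
  have hPdiff : ∀ z : ℂ, DifferentiableAt ℂ P z := by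
    intro z
    apply DifferentiableAt.add
    · exact (differentiableAt_id.pow _)
    · exact DifferentiableAt.fun_sum fun j _ =>
        (differentiableAt_const _).mul (differentiableAt_id.pow _)
  have hfd : ∀ z : ℂ, r ≤ ‖z‖ → DifferentiableAt ℂ f z := by
    intro z hz
    exact ((differentiableAt_const _).add
      ((differentiableAt_const _).mul (differentiableAt_id.pow _))).div (hPdiff z) (hPne z hz)
  -- Step 1: the integral is independent of the radius
  have key : ∀ R : ℝ, r ≤ R →
      (∮ z in C(0, R), f z) = ∮ z in C(0, r), f z := by
    intro R hR
    apply circleIntegral_eq_of_differentiable_on_annulus_off_countable hr hR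
      Set.countable_empty
    · intro z hz
      rcases hz with ⟨_, hz2⟩
      have : r ≤ ‖z‖ := by
        simpa [Complex.dist_eq] using not_lt.1 (fun h => hz2 (by simpa [Complex.dist_eq] using h))
      exact (hfd z this).continuousAt.continuousWithinAt
    · intro z hz
      rcases hz with ⟨⟨_, hz2⟩, _⟩
      have : r ≤ ‖z‖ := by
        have := hz2
        simp only [mem_closedBall, Complex.dist_eq, sub_zero, not_le] at this
        exact this.le
      exact hfd z this
  -- Constants for the estimate
  set S : ℝ := ∑ j : Fin k, ‖ε j‖ with hSdef
  have hS0 : 0 ≤ S := Finset.sum_nonneg fun j _ => (norm_nonneg _)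
  set C : ℝ := 1 + ‖a‖ * S with hCdef
  have hC0 : (0:ℝ) < C := by positivity
  -- the difference with 2πi a
  set c : ℂ := (∮ z in C(0, r), f z) - 2 * (Real.pi : ℂ) * Complex.I * a with hcdef
  -- Step 2: bound ‖c‖ by 4πC/R for all large R
  have hbound : ∀ R : ℝ, r ≤ R → 1 ≤ R → 2 * S ≤ R →
      ‖c‖ ≤ 2 * Real.pi * R * (2 * C / R ^ 2) := by
    intro R hrR h1R hSR
    have hR0 : (0:ℝ) < R := lt_of_lt_of_le one_pos h1R
    -- rewrite c as a single circle integral over radius R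
    have h2pi : (∮ z in C(0, R), a * (z - 0)⁻¹) = 2 * (Real.pi : ℂ) * Complex.I * a := by
      rw [circleIntegral.integral_const_mul, circleIntegral.integral_sub_inv_of_mem_ball
        (by simpa using hR0)]
      ring
    have hfint : CircleIntegrable f 0 R := by
      apply ContinuousOn.circleIntegrable hR0.le
      intro z hz
      have hz' : ‖z‖ = R := by simpa [Complex.dist_eq, sub_zero] using hz
      exact (hfd z (hz' ▸ hrR)).continuousAt.continuousWithinAt
    have hgint : CircleIntegrable (fun z => a * (z - 0)⁻¹) 0 R := by
      apply ContinuousOn.circleIntegrable hR0.le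
      intro z hz
      have hz' : ‖z‖ = R := by simpa [Complex.dist_eq, sub_zero] using hz
      have hz0 : z ≠ 0 := by
        intro h; rw [h] at hz'; simp at hz'; linarith
      exact (continuousAt_const.mul ((continuousAt_id.sub continuousAt_const).inv₀
        (by simpa using hz0))).continuousWithinAt
    have hc_eq : c = ∮ z in C(0, R), (f z - a * (z - 0)⁻¹) := by
      rw [circleIntegral.integral_sub hfint hgint, h2pi, hcdef, key R hrR]
    rw [hc_eq]
    apply circleIntegral.norm_integral_le_of_norm_le_const hR0.le
    intro z hz
    have hzabs : ‖z‖ = R := by simpa [Complex.dist_eq, sub_zero] using hz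
    have hzr : r ≤ ‖z‖ := hzabs ▸ hrR
    have hz0 : z ≠ 0 := by
      intro h; rw [h] at hzabs; simp at hzabs; linarith
    have hPz := hPne z hzr
    -- rewrite the difference
    have heq : f z - a * (z - 0)⁻¹ = (z - a * ∑ j : Fin k, ε j * z ^ (j : ℕ)) / (z * P z) := by
      rw [hfdef]
      simp only [sub_zero, hPdef]
      have hPz' : z ^ (k + 1) + ∑ j : Fin k, ε j * z ^ (j : ℕ) ≠ 0 := hPz
      field_simp
      ring
    rw [heq]
    -- numerator bound
    have hnum : ‖z - a * ∑ j : Fin k, ε j * z ^ (j : ℕ)‖ ≤ C * R ^ k := by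
      have h1 : ‖z‖ ≤ R ^ k := by
        rw [hzabs]; calc R = R ^ 1 := (pow_one R).symm
        _ ≤ R ^ k := pow_le_pow_right₀ h1R hk
      have h2 : ‖a * ∑ j : Fin k, ε j * z ^ (j : ℕ)‖ ≤ ‖a‖ * (S * R ^ k) := by
        rw [norm_mul]
        apply mul_le_mul_of_nonneg_left _ (norm_nonneg a)
        calc ‖∑ j : Fin k, ε j * z ^ (j : ℕ)‖
            ≤ ∑ j : Fin k, ‖ε j * z ^ (j : ℕ)‖ := norm_sum_le _ _
          _ ≤ ∑ j : Fin k, ‖ε j‖ * R ^ k := by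
              apply Finset.sum_le_sum
              intro j _
              rw [norm_mul, norm_pow, hzabs]
              apply mul_le_mul_of_nonneg_left _ (norm_nonneg _)
              exact pow_le_pow_right₀ h1R (le_of_lt j.2)
          _ = S * R ^ k := by rw [hSdef, Finset.sum_mul]
      calc ‖z - a * ∑ j : Fin k, ε j * z ^ (j : ℕ)‖
          ≤ ‖z‖ + ‖a * ∑ j : Fin k, ε j * z ^ (j : ℕ)‖ :=
            (norm_sub_le _ _)
        _ ≤ R ^ k + ‖a‖ * (S * R ^ k) := add_le_add h1 h2
        _ = C * R ^ k := by rw [hCdef]; ring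
    -- denominator bound
    have hden : R ^ (k + 1) * (R / 2) ≤ ‖z * P z‖ := by
      rw [norm_mul, hzabs]
      have hPlow : R ^ k * (R / 2) ≤ ‖P z‖ := by
        have h1 : ‖∑ j : Fin k, ε j * z ^ (j : ℕ)‖ ≤ S * R ^ k := by
          calc ‖∑ j : Fin k, ε j * z ^ (j : ℕ)‖
              ≤ ∑ j : Fin k, ‖ε j * z ^ (j : ℕ)‖ := norm_sum_le _ _
            _ ≤ ∑ j : Fin k, ‖ε j‖ * R ^ k := by
                apply Finset.sum_le_sum
                intro j _
                rw [norm_mul, norm_pow, hzabs]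
                exact mul_le_mul_of_nonneg_left (pow_le_pow_right₀ h1R (le_of_lt j.2))
                  (norm_nonneg _)
            _ = S * R ^ k := by rw [hSdef, Finset.sum_mul]
        have h2 : ‖z ^ (k+1)‖ = R ^ (k+1) := by rw [norm_pow, hzabs]
        have h3 : R ^ (k+1) - S * R ^ k ≤ ‖P z‖ := by
          have hkey : ‖z ^ (k+1)‖ - ‖∑ j : Fin k, ε j * z ^ (j : ℕ)‖
              ≤ ‖P z‖ := by
            have h := norm_sub_norm_le (z ^ (k+1)) (-(∑ j : Fin k, ε j * z ^ (j : ℕ)))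
            rw [sub_neg_eq_add, norm_neg] at h
            have hPz2 : z ^ (k+1) + ∑ j : Fin k, ε j * z ^ (j : ℕ) = P z := rfl
            rw [hPz2] at h
            exact h
          rw [h2] at hkey
          linarith
        have h4 : R ^ k * (R / 2) ≤ R ^ (k+1) - S * R ^ k := by
          have : R ^ (k+1) = R ^ k * R := by ring
          rw [this]
          have hRk : (0:ℝ) ≤ R ^ k := pow_nonneg hR0.le _
          nlinarith
        linarith
      calc R ^ (k+1) * (R / 2) = R * (R ^ k * (R / 2)) := by ring
        _ ≤ R * ‖P z‖ := by
            apply mul_le_mul_of_nonneg_left hPlow hR0.le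
    -- conclude the pointwise bound
    have hdenpos : (0:ℝ) < R ^ (k + 1) * (R / 2) := by positivity
    rw [norm_div]
    rw [div_le_div_iff₀ (lt_of_lt_of_le hdenpos hden) (by positivity)]
    calc ‖z - a * ∑ j : Fin k, ε j * z ^ (j : ℕ)‖ * R ^ 2
        ≤ (C * R ^ k) * R ^ 2 := by
          apply mul_le_mul_of_nonneg_right hnum (by positivity)
      _ = (2 * C) * (R ^ (k+1) * (R / 2)) := by ring
      _ ≤ (2 * C) * ‖z * P z‖ := by
          apply mul_le_mul_of_nonneg_left hden (by positivity)
      _ = 2 * C * ‖z * P z‖ := by ring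
  -- Step 3: c = 0
  have hc0 : c = 0 := by
    rw [← norm_le_zero_iff]
    apply le_of_forall_pos_le_add
    intro δ hδ
    rw [zero_add]
    set R : ℝ := max (max r 1) (max (2 * S) (4 * Real.pi * C / δ)) with hRdef
    have hrR : r ≤ R := le_trans (le_max_left _ _) (le_max_left _ _)
    have h1R : 1 ≤ R := le_trans (le_max_right _ _) (le_max_left _ _)
    have hSR : 2 * S ≤ R := le_trans (le_max_left _ _) (le_max_right _ _)
    have hdR : 4 * Real.pi * C / δ ≤ R := le_trans (le_max_right _ _) (le_max_right _ _)
    have hR0 : (0:ℝ) < R := lt_of_lt_of_le one_pos h1R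
    calc ‖c‖ ≤ 2 * Real.pi * R * (2 * C / R ^ 2) := hbound R hrR h1R hSR
      _ = 4 * Real.pi * C / R := by field_simp; ring
      _ ≤ δ := by
          rw [div_le_iff₀ hR0]
          calc 4 * Real.pi * C = δ * (4 * Real.pi * C / δ) := by field_simp
            _ ≤ δ * R := by apply mul_le_mul_of_nonneg_left hdR hδ.le
  have hint : (∮ z in C(0, r), f z) = 2 * (Real.pi : ℂ) * Complex.I * a := by
    have := hc0
    rw [hcdef, sub_eq_zero] at this
    exact this
  rw [show (∮ z in C(0, r),
      (1 + a * z ^ k) / (z ^ (k + 1) + ∑ j : Fin k, ε j * z ^ (j : ℕ))) =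
      ∮ z in C(0, r), f z from rfl, hint]
  have h2piI : (2 * (Real.pi : ℂ) * Complex.I) ≠ 0 := by
    simp [Real.pi_ne_zero, Complex.I_ne_zero]
  field_simp
end

section
/- Let k ≥ 1, a ∈ ℂ, let Ω ⊆ ℂ × ℂ be open, let P : ℂ → ℂ, and let R, N : Ω → ℂ be holomorphic. Suppose that the cohomological equation P(x)·∂N/∂x(x,y) + y·(1 + a·x^k − R(x,y))·∂N/∂y(x,y) = R(x,y) holds for all (x,y) ∈ Ω (i.e. X·N = R for the vector field X(x,y) = (P(x), y·(1 + a·x^k − R(x,y)))). Define ψ : Ω → ℂ × ℂ by ψ(x,y) = (x, y·exp(N(x,y))). Then for every (x,y) ∈ Ω the derivative of ψ sends the vector X(x,y) to the model vector at the image point: Dψ(x,y)(X(x,y)) = (P(x), y·e^{N(x,y)}·(1 + a·x^k)) = X^M(ψ(x,y)), where X^M(x,y) = (P(x), y·(1 + a·x^k)). In other words, ψ — the time-N flow of Y = y ∂/∂y — is an (infinitesimal) conjugacy between X and the model X^M. -/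
/-- **The time-`N` flow of `y ∂/∂y` conjugates `X` to the model `X^M`.**
If `N` solves the cohomological equation
`P(x)·∂N/∂x + y(1 + a x^k − R)·∂N/∂y = R` on an open `Ω ⊆ ℂ²` (i.e. `X·N = R`
for `X(x,y) = (P(x), y(1 + a x^k − R(x,y)))`), then
`ψ(x,y) = (x, y·e^{N(x,y)})` satisfies
`Dψ(x,y)(X(x,y)) = (P(x), y·e^{N(x,y)}·(1 + a x^k)) = X^M(ψ(x,y))`,
where `X^M(x,y) = (P(x), y(1 + a x^k))`. -/
theorem flow_conjugates_to_model (k : ℕ) (hk : 1 ≤ k) (a : ℂ)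
    (Ω : Set (ℂ × ℂ)) (hΩ : IsOpen Ω) (P : ℂ → ℂ) (R N : ℂ × ℂ → ℂ)
    (hR : DifferentiableOn ℂ R Ω) (hN : DifferentiableOn ℂ N Ω)
    (heq : ∀ p ∈ Ω, P p.1 * fderiv ℂ N p (1, 0) +
      p.2 * (1 + a * p.1 ^ k - R p) * fderiv ℂ N p (0, 1) = R p)
    (ψ : ℂ × ℂ → ℂ × ℂ)
    (hψ : ∀ p : ℂ × ℂ, ψ p = (p.1, p.2 * Complex.exp (N p)))
    (X : ℂ × ℂ → ℂ × ℂ)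
    (hX : ∀ p : ℂ × ℂ, X p = (P p.1, p.2 * (1 + a * p.1 ^ k - R p)))
    (XM : ℂ × ℂ → ℂ × ℂ)
    (hXM : ∀ p : ℂ × ℂ, XM p = (P p.1, p.2 * (1 + a * p.1 ^ k))) :
    ∀ p ∈ Ω,
      fderiv ℂ ψ p (X p) = (P p.1, p.2 * Complex.exp (N p) * (1 + a * p.1 ^ k)) ∧
      fderiv ℂ ψ p (X p) = XM (ψ p) := by
  intro p hp
  have hpn : Ω ∈ nhds p := hΩ.mem_nhds hp
  have hNp : DifferentiableAt ℂ N p :=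
    (hN p hp).differentiableAt hpn
  set N' := fderiv ℂ N p with hN'def
  have hN' : HasFDerivAt N N' p := hNp.hasFDerivAt
  -- derivative of the second component
  have h2 : HasFDerivAt (fun q : ℂ × ℂ => q.2 * Complex.exp (N q))
      (p.2 • (Complex.exp (N p) • N') +
        Complex.exp (N p) • (ContinuousLinearMap.snd ℂ ℂ ℂ)) p :=
    (hasFDerivAt_snd (𝕜 := ℂ)).mul hN'.cexp
  have hψd : HasFDerivAt ψ
      ((ContinuousLinearMap.fst ℂ ℂ ℂ).prod
        (p.2 • (Complex.exp (N p) • N') +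
          Complex.exp (N p) • (ContinuousLinearMap.snd ℂ ℂ ℂ))) p := by
    have := HasFDerivAt.prodMk (hasFDerivAt_fst (𝕜 := ℂ)) h2
    exact this.congr_of_eventuallyEq
      (Filter.Eventually.of_forall fun q => hψ q)
  have hfd := hψd.fderiv
  -- linearity of N' on the vector X p
  have hlin : ∀ u w : ℂ, N' (u, w) = u * N' (1, 0) + w * N' (0, 1) := by
    intro u w
    have h : (u, w) = u • ((1 : ℂ), (0 : ℂ)) + w • ((0 : ℂ), (1 : ℂ)) := by
      simp [Prod.ext_iff]
    rw [h, map_add, map_smul, map_smul, smul_eq_mul, smul_eq_mul]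
  have key : N' (X p) = R p := by
    rw [hX p, hlin]
    exact heq p hp
  have h1 : fderiv ℂ ψ p (X p) =
      (P p.1, p.2 * Complex.exp (N p) * (1 + a * p.1 ^ k)) := by
    rw [hfd]
    simp only [ContinuousLinearMap.prod_apply, ContinuousLinearMap.add_apply,
      ContinuousLinearMap.smul_apply, ContinuousLinearMap.coe_fst',
      ContinuousLinearMap.coe_snd', smul_eq_mul]
    rw [key]
    rw [hX p]
    exact Prod.ext rfl (by dsimp; ring)
  refine ⟨h1, ?_⟩
  rw [h1, hXM, hψ]
end
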